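/- Let (Q(t))_{t≥1} be a sequence of nonnegative random variables with 0 ≤ Q(t)/t ≤ S(t)/t, where S(t)/t converges almost surely and in mean to a constant λ > 0 (so that {S(t)/t} is uniformly integrable). If lim_{q→∞} limsup_{t→∞} P(Q(t) > q) = 0, then lim_{t→∞} E[Q(t)]/t = 0. -/

import Mathlib

open MeasureTheory Filter Topology

/-- Lemma `weak -> average`: if `0 ≤ Q(t) ≤ S(t)` where
`S(t)/t → λ > 0` almost surely and in mean, and the queue process satisfies
the stability (tightness) condition
`lim_{q→∞} limsup_{t→∞} P(Q(t) > q) = 0`, then `E[Q(t)]/t → 0`. -/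
theorem stmt12 {Ω : Type*} [MeasurableSpace Ω] (P : Measure Ω)
    [IsProbabilityMeasure P]
    (Q S : ℕ → Ω → ℝ) (lam : ℝ) (hlam : 0 < lam)
    (hQint : ∀ t, Integrable (Q t) P)
    (hSint : ∀ t, Integrable (S t) P)
    (hQ0 : ∀ t ω, 0 ≤ Q t ω)
    (hQS : ∀ t ω, Q t ω ≤ S t ω)
    (hSas : ∀ᵐ ω ∂P, Tendsto (fun t : ℕ => S t ω / t) atTop (𝓝 lam))
    (hSmean : Tendsto (fun t : ℕ => (∫ ω, S t ω ∂P) / t) atTop (𝓝 lam))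
    (hstab : Tendsto
      (fun q : ℝ => limsup (fun t : ℕ => (P {ω | Q t ω > q}).toReal) atTop)
      atTop (𝓝 0)) :
    Tendsto (fun t : ℕ => (∫ ω, Q t ω ∂P) / t) atTop (𝓝 0) := by
  -- notation: f t ω = S t ω / t
  set f : ℕ → Ω → ℝ := fun t ω => S t ω / t with hf
  have hS0 : ∀ t ω, 0 ≤ S t ω := fun t ω => le_trans (hQ0 t ω) (hQS t ω)
  have hf0 : ∀ t ω, 0 ≤ f t ω := fun t ω => div_nonneg (hS0 t ω) (Nat.cast_nonneg t)
  have hfint : ∀ t, Integrable (f t) P := fun t => (hSint t).div_const _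
  have habsint : ∀ t, Integrable (fun ω => |f t ω - lam|) P :=
    fun t => ((hfint t).sub (integrable_const lam)).abs
  -- Step A (Scheffé): ∫ |f t - lam| → 0.
  have hA : Tendsto (fun t : ℕ => ∫ ω, |f t ω - lam| ∂P) atTop (𝓝 0) := by
    have hneg : Tendsto (fun t : ℕ => ∫ ω, max (lam - f t ω) 0 ∂P) atTop (𝓝 0) := by
      have key := tendsto_integral_of_dominated_convergence (F := fun t ω => max (lam - f t ω) 0)
        (f := fun _ => (0:ℝ)) (bound := fun _ => lam) (μ := P)
      have hkey : Tendsto (fun t : ℕ => ∫ ω, max (lam - f t ω) 0 ∂P) atTop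
          (𝓝 (∫ _ω, (0:ℝ) ∂P)) := by
        apply key
        · intro t
          exact ((aestronglyMeasurable_const.sub (hfint t).aestronglyMeasurable).sup
            aestronglyMeasurable_const)
        · exact integrable_const lam
        · intro t
          filter_upwards with ω
          rw [Real.norm_eq_abs, abs_of_nonneg (le_max_right _ _)]
          exact max_le (by linarith [hf0 t ω]) hlam.le
        · filter_upwards [hSas] with ω hω
          have : Tendsto (fun t : ℕ => max (lam - f t ω) 0) atTop (𝓝 (max (lam - lam) 0)) :=
            ((tendsto_const_nhds.sub hω).max tendsto_const_nhds)
          simpa using this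
      simpa using hkey
    have hmean : Tendsto (fun t : ℕ => (∫ ω, f t ω ∂P) - lam) atTop (𝓝 0) := by
      have : Tendsto (fun t : ℕ => (∫ ω, f t ω ∂P)) atTop (𝓝 lam) := by
        simpa [hf, integral_div] using hSmean
      simpa using this.sub_const lam
    have heq : ∀ t : ℕ, ∫ ω, |f t ω - lam| ∂P
        = ((∫ ω, f t ω ∂P) - lam) + 2 * ∫ ω, max (lam - f t ω) 0 ∂P := by
      intro t
      have : ∀ ω, |f t ω - lam| = (f t ω - lam) + 2 * max (lam - f t ω) 0 := by
        intro ω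
        rcases le_total lam (f t ω) with h | h
        · rw [abs_of_nonneg (by linarith), max_eq_right (by linarith)]; ring
        · rw [abs_of_nonpos (by linarith), max_eq_left (by linarith)]; ring
      simp_rw [this]
      have i1 : Integrable (fun ω => f t ω - lam) P := (hfint t).sub (integrable_const lam)
      have i2 : Integrable (fun ω => 2 * max (lam - f t ω) 0) P := by
        exact (((integrable_const lam).sub (hfint t)).sup (integrable_const 0)).const_mul 2
      rw [integral_add i1 i2, integral_sub (hfint t) (integrable_const lam),
        integral_const_mul]
      simp
    simp_rw [heq]
    simpa using hmean.add ((tendsto_const_nhds (x := (2:ℝ))).mul hneg)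
  -- measurable versions of Q t
  rw [NormedAddCommGroup.tendsto_nhds_zero]
  intro ε hε
  -- choose q
  have hc : 0 < ε / (4 * (lam + 1)) := by positivity
  have hbdd : ∀ q : ℝ, IsBoundedUnder (· ≤ ·) atTop
      (fun t : ℕ => (P {ω | Q t ω > q}).toReal) := by
    intro q
    exact isBoundedUnder_of ⟨1, fun t => by
      simpa using ENNReal.toReal_le_of_le_ofReal zero_le_one (by simpa using prob_le_one)⟩
  obtain ⟨q, hq0, hqlim⟩ : ∃ q : ℝ, 0 ≤ q ∧
      limsup (fun t : ℕ => (P {ω | Q t ω > q}).toReal) atTop < ε / (4 * (lam + 1)) := by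
    have h1 := hstab.eventually (eventually_lt_nhds hc)
    rcases (h1.and (eventually_ge_atTop (0:ℝ))).exists with ⟨q, hq1, hq2⟩
    exact ⟨q, hq2, hq1⟩
  have hev1 : ∀ᶠ t : ℕ in atTop, (P {ω | Q t ω > q}).toReal < ε / (4 * (lam + 1)) :=
    eventually_lt_of_limsup_lt hqlim (hbdd q)
  have hev2 : ∀ᶠ t : ℕ in atTop, ∫ ω, |f t ω - lam| ∂P < ε / 4 :=
    hA.eventually (eventually_lt_nhds (by positivity))
  have hev3 : ∀ᶠ t : ℕ in atTop, q / (t : ℝ) < ε / 4 :=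
    (tendsto_const_div_atTop_nhds_zero_nat q).eventually (eventually_lt_nhds (by positivity))
  filter_upwards [hev1, hev2, hev3] with t h1 h2 h3
  -- measurable version of Q t
  set Q' : Ω → ℝ := (hQint t).aestronglyMeasurable.mk (Q t) with hQ'
  have hQeq : Q t =ᵐ[P] Q' := (hQint t).aestronglyMeasurable.ae_eq_mk
  have hA'meas : MeasurableSet {ω | Q' ω > q} :=
    measurableSet_lt measurable_const
      ((hQint t).aestronglyMeasurable.stronglyMeasurable_mk.measurable)
  have hPeq : P {ω | Q t ω > q} = P {ω | Q' ω > q} := by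
    apply measure_congr
    filter_upwards [hQeq] with ω hω
    exact congrArg (fun x : ℝ => x > q) hω
  -- pointwise bound
  have hptwise : ∀ᵐ ω ∂P, Q t ω / t ≤
      q / t + |f t ω - lam| + Set.indicator {ω | Q' ω > q} (fun _ => lam) ω := by
    filter_upwards [hQeq] with ω hω
    by_cases hmem : ω ∈ {ω | Q' ω > q}
    · rw [Set.indicator_of_mem hmem]
      have h4 : Q t ω / t ≤ f t ω := by
        show Q t ω / (t:ℝ) ≤ S t ω / (t:ℝ)
        gcongr
        exact hQS t ω
      have h5 : f t ω ≤ |f t ω - lam| + lam := by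
        have := abs_sub_abs_le_abs_sub (f t ω) lam
        have := le_abs_self (f t ω - lam)
        linarith
      have : (0:ℝ) ≤ q / t := div_nonneg hq0 (Nat.cast_nonneg t)
      linarith
    · rw [Set.indicator_of_notMem hmem]
      simp only [Set.mem_setOf_eq, not_lt] at hmem
      have hQq : Q t ω ≤ q := hω ▸ hmem
      have : Q t ω / t ≤ q / t := by gcongr
      have := abs_nonneg (f t ω - lam)
      linarith
  -- integrate
  have hrhsint : Integrable (fun ω => q / (t:ℝ) + |f t ω - lam|
      + Set.indicator {ω | Q' ω > q} (fun _ => lam) ω) P :=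
    ((integrable_const _).add (habsint t)).add
      ((integrable_const lam).indicator hA'meas)
  have hint : ∫ ω, Q t ω / t ∂P ≤ ∫ ω, (q / (t:ℝ) + |f t ω - lam|
      + Set.indicator {ω | Q' ω > q} (fun _ => lam) ω) ∂P :=
    integral_mono_ae ((hQint t).div_const _) hrhsint hptwise
  have hrhseval : ∫ ω, (q / (t:ℝ) + |f t ω - lam|
      + Set.indicator {ω | Q' ω > q} (fun _ => lam) ω) ∂P
      = q / t + (∫ ω, |f t ω - lam| ∂P) + (P {ω | Q' ω > q}).toReal * lam := by
    have i1 : Integrable (fun ω => q / (t:ℝ) + |f t ω - lam|) P :=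
      (integrable_const _).add (habsint t)
    have i2 : Integrable (fun ω => Set.indicator {ω | Q' ω > q} (fun _ => lam) ω) P := by
      exact (integrable_const lam).indicator hA'meas
    rw [integral_add i1 i2, integral_add (integrable_const _) (habsint t),
      integral_indicator_const _ hA'meas, integral_const]
    simp [smul_eq_mul, mul_comm, measureReal_def]
  have hnonneg : (0:ℝ) ≤ (∫ ω, Q t ω ∂P) / t :=
    div_nonneg (integral_nonneg (fun ω => hQ0 t ω)) (Nat.cast_nonneg t)
  rw [Real.norm_eq_abs, abs_of_nonneg hnonneg]
  have hkey : (∫ ω, Q t ω ∂P) / t ≤ q / t + (∫ ω, |f t ω - lam| ∂P)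
      + (P {ω | Q t ω > q}).toReal * lam := by
    rw [← integral_div, hPeq]
    calc ∫ ω, Q t ω / t ∂P ≤ _ := hint
    _ = _ := hrhseval
  have hlast : (P {ω | Q t ω > q}).toReal * lam < ε / 4 := by
    have : (P {ω | Q t ω > q}).toReal * lam < (ε / (4 * (lam + 1))) * lam := by
      apply mul_lt_mul_of_pos_right h1 hlam
    calc (P {ω | Q t ω > q}).toReal * lam < (ε / (4 * (lam + 1))) * lam := this
    _ ≤ ε / 4 := by
        rw [div_mul_eq_mul_div, div_le_div_iff₀ (by positivity) (by norm_num)]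
        nlinarith
  linarith
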